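/- Let G be a connected graph with 2r vertices such that every maximal matching of G has size r. Then G is isomorphic to the complete graph K_{2r} or to the complete bipartite graph K_{r,r}. -/

import Mathlib

open SimpleGraph

/-- A matching of a simple graph, given as a set of edges: each edge belongs to the
graph, and distinct edges of the matching share no vertex. -/
def EdgeMatching {V : Type*} (G : SimpleGraph V) (M : Set (Sym2 V)) : Prop :=
  M ⊆ G.edgeSet ∧ ∀ e ∈ M, ∀ f ∈ M, e ≠ f → ∀ v : V, v ∈ e → v ∉ f

/-- The set of vertices covered by a set of edges. -/
def mCover {V : Type*} (M : Set (Sym2 V)) : Set V := {v | ∃ e ∈ M, v ∈ e}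

/-- A maximal matching: a matching to which no edge of the graph can be added. -/
def MaximalEdgeMatching {V : Type*} (G : SimpleGraph V) (M : Set (Sym2 V)) : Prop :=
  EdgeMatching G M ∧ ∀ e ∈ G.edgeSet, EdgeMatching G (insert e M) → e ∈ M

set_option linter.unusedSectionVars false
set_option linter.unusedVariables false

section Aux

variable {V : Type*} [Fintype V] {G : SimpleGraph V}

lemma EdgeMatching.mono {M N : Set (Sym2 V)} (hM : EdgeMatching G M) (h : N ⊆ M) :
    EdgeMatching G N :=
  ⟨fun e he => hM.1 (h he), fun e he f hf hef v hv => hM.2 e (h he) f (h hf) hef v hv⟩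

lemma edge_vertexSet_ncard {e : Sym2 V} (he : e ∈ G.edgeSet) : {v : V | v ∈ e}.ncard = 2 := by
  induction e using Sym2.ind with
  | _ a b =>
    have hab : a ≠ b := (G.mem_edgeSet.mp he).ne
    have h2 : {v : V | v ∈ (s(a,b) : Sym2 V)} = {a, b} := by
      ext v; simp [Sym2.mem_iff]
    rw [h2, Set.ncard_pair hab]

lemma mCover_insert (e : Sym2 V) (M : Set (Sym2 V)) :
    mCover (insert e M) = {v | v ∈ e} ∪ mCover M := by
  ext v
  simp only [mCover, Set.mem_setOf_eq, Set.mem_insert_iff, Set.mem_union]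
  constructor
  · rintro ⟨f, (rfl | hf), hvf⟩
    · exact Or.inl hvf
    · exact Or.inr ⟨f, hf, hvf⟩
  · rintro (hv | ⟨f, hf, hvf⟩)
    · exact ⟨e, Or.inl rfl, hv⟩
    · exact ⟨f, Or.inr hf, hvf⟩

lemma count_lemma (M : Set (Sym2 V)) (hM : EdgeMatching G M) :
    (mCover M).ncard = 2 * M.ncard := by
  classical
  refine Set.Finite.induction_on (motive := fun s _ => EdgeMatching G s → (mCover s).ncard = 2 * s.ncard)
    M (Set.toFinite M) (fun _ => by simp [mCover]) ?_ hM
  intro e s hes hsfin ih h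
  have hs : EdgeMatching G s := h.mono (Set.subset_insert _ _)
  have hdisj : Disjoint {v : V | v ∈ e} (mCover s) := by
    rw [Set.disjoint_left]
    rintro v hv ⟨f, hf, hvf⟩
    exact h.2 e (Set.mem_insert _ _) f (Set.mem_insert_of_mem _ hf)
      (fun hh => hes (hh ▸ hf)) v hv hvf
  rw [mCover_insert, Set.ncard_union_eq hdisj (Set.toFinite _) (Set.toFinite _),
    edge_vertexSet_ncard (h.1 (Set.mem_insert _ _)), ih hs,
    Set.ncard_insert_of_notMem hes (Set.toFinite _)]
  ring

lemma exists_maximal_ext (M0 : Set (Sym2 V)) (h0 : EdgeMatching G M0) :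
    ∃ M, MaximalEdgeMatching G M ∧ M0 ⊆ M := by
  classical
  set S : Finset (Finset (Sym2 V)) :=
    Finset.univ.filter (fun T : Finset (Sym2 V) => EdgeMatching G ↑T ∧ M0 ⊆ ↑T) with hS
  have hne : S.Nonempty := by
    refine ⟨(Set.toFinite M0).toFinset, ?_⟩
    rw [hS, Finset.mem_filter]
    rw [Set.Finite.coe_toFinset]
    exact ⟨Finset.mem_univ _, h0, subset_rfl⟩
  obtain ⟨T, hT, hTmax⟩ := S.exists_max_image Finset.card hne
  rw [hS, Finset.mem_filter] at hT
  refine ⟨↑T, ⟨hT.2.1, ?_⟩, hT.2.2⟩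
  intro e he hins
  by_contra hnot
  have hmem : insert e T ∈ S := by
    rw [hS, Finset.mem_filter]
    refine ⟨Finset.mem_univ _, ?_, ?_⟩
    · rwa [Finset.coe_insert]
    · rw [Finset.coe_insert]
      exact hT.2.2.trans (Set.subset_insert _ _)
  have := hTmax _ hmem
  rw [Finset.card_insert_of_notMem (fun h => hnot (Finset.mem_coe.mpr h))] at this
  omega

lemma perfect_ext {r : ℕ} (hcard : Fintype.card V = 2 * r)
    (hmax : ∀ M : Set (Sym2 V), MaximalEdgeMatching G M → M.ncard = r)
    (M0 : Set (Sym2 V)) (h0 : EdgeMatching G M0) :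
    ∃ M, EdgeMatching G M ∧ M0 ⊆ M ∧ mCover M = Set.univ := by
  obtain ⟨M, hM, hsub⟩ := exists_maximal_ext M0 h0
  refine ⟨M, hM.1, hsub, ?_⟩
  have h1 : (mCover M).ncard = 2 * r := by rw [count_lemma M hM.1, hmax M hM]
  have h2 : (Set.univ : Set V).ncard = 2 * r := by
    rw [Set.ncard_univ, Nat.card_eq_fintype_card, hcard]
  exact Set.eq_of_subset_of_ncard_le (Set.subset_univ _) (by rw [h1, h2]) (Set.toFinite _)


lemma adj_of_cover_compl {r : ℕ} (hcard : Fintype.card V = 2 * r)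
    (hmax : ∀ M : Set (Sym2 V), MaximalEdgeMatching G M → M.ncard = r)
    {M1 : Set (Sym2 V)} (h1 : EdgeMatching G M1)
    {p q : V} (hpq : p ≠ q) (hcov : mCover M1 = ({p, q} : Set V)ᶜ) : G.Adj p q := by
  obtain ⟨M2, hM2, hsub, hcov2⟩ := perfect_ext hcard hmax M1 h1
  have hpM1 : p ∉ mCover M1 := by rw [hcov]; simp
  have hpM2 : p ∈ mCover M2 := hcov2 ▸ Set.mem_univ p
  have hne : M1 ≠ M2 := fun h => hpM1 (h ▸ hpM2)
  obtain ⟨e, heM2, heM1⟩ := Set.exists_of_ssubset (hsub.ssubset_of_ne hne)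
  have hnotcov : ∀ v ∈ e, v ∈ ({p, q} : Set V) := by
    intro v hv
    by_contra hvpq
    have hvcov : v ∈ mCover M1 := by rw [hcov]; exact hvpq
    obtain ⟨f, hf, hvf⟩ := hvcov
    exact hM2.2 e heM2 f (hsub hf) (fun h => heM1 (h ▸ hf)) v hv hvf
  have hadj : G.Adj p q := by
    revert heM2 heM1 hnotcov
    induction e using Sym2.ind with
    | _ u w =>
      intro heM2 heM1 hnotcov
      have huw : G.Adj u w := G.mem_edgeSet.mp (hM2.1 heM2)
      have hu := hnotcov u (by simp)
      have hw := hnotcov w (by simp)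
      simp only [Set.mem_insert_iff, Set.mem_singleton_iff] at hu hw
      rcases hu with rfl | rfl <;> rcases hw with rfl | rfl
      · exact absurd rfl huw.ne
      · exact huw
      · exact huw.symm
      · exact absurd rfl huw.ne
  exact hadj

lemma swap_adj {r : ℕ} (hcard : Fintype.card V = 2 * r)
    (hmax : ∀ M : Set (Sym2 V), MaximalEdgeMatching G M → M.ncard = r)
    {M : Set (Sym2 V)} (hM : EdgeMatching G M) (hcov : mCover M = Set.univ)
    {a b c d : V} (hab : s(a,b) ∈ M) (hcd : s(c,d) ∈ M) (hne : s(a,b) ≠ s(c,d))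
    (hac : G.Adj a c) : G.Adj b d := by
  have hAab : G.Adj a b := G.mem_edgeSet.mp (hM.1 hab)
  have hAcd : G.Adj c d := G.mem_edgeSet.mp (hM.1 hcd)
  have hdisj : ∀ v : V, v ∈ (s(a,b) : Sym2 V) → v ∉ (s(c,d) : Sym2 V) :=
    fun v hv => hM.2 _ hab _ hcd hne v hv
  have hbc : b ≠ c := fun h => hdisj b (by simp) (by simp [h])
  have hbd : b ≠ d := fun h => hdisj b (by simp) (by simp [h])
  have had : a ≠ d := fun h => hdisj a (by simp) (by simp [h])
  set M1 : Set (Sym2 V) := insert s(a,c) (M \ {s(a,b), s(c,d)}) with hM1def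
  have hM1 : EdgeMatching G M1 := by
    constructor
    · rintro e (rfl | ⟨heM, -⟩)
      · exact G.mem_edgeSet.mpr hac
      · exact hM.1 heM
    · have key : ∀ f ∈ M \ ({s(a,b), s(c,d)} : Set (Sym2 V)), ∀ v : V, v ∈ (s(a,c) : Sym2 V) → v ∉ f := by
        rintro f ⟨hfM, hfne⟩ v hv hvf
        simp only [Set.mem_insert_iff, Set.mem_singleton_iff, not_or] at hfne
        rcases Sym2.mem_iff.mp hv with rfl | rfl
        · exact hM.2 _ hab f hfM (fun h => hfne.1 h.symm) v (by simp) hvf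
        · exact hM.2 _ hcd f hfM (fun h => hfne.2 h.symm) v (by simp) hvf
      rintro e (rfl | heM) f (rfl | hfM) hef v hv hvf
      · exact hef rfl
      · exact key f hfM v hv hvf
      · exact key e heM v hvf hv
      · exact hM.2 e heM.1 f hfM.1 hef v hv hvf
  have hcov1 : mCover M1 = ({b, d} : Set V)ᶜ := by
    ext v
    simp only [Set.mem_compl_iff, Set.mem_insert_iff, Set.mem_singleton_iff, not_or]
    constructor
    · rintro ⟨f, hfM1, hvf⟩
      rcases hfM1 with rfl | ⟨hfM, hfne⟩
      · rcases Sym2.mem_iff.mp hvf with rfl | rfl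
        · exact ⟨hAab.ne, had⟩
        · exact ⟨fun h => hbc h.symm, hAcd.ne⟩
      · simp only [Set.mem_insert_iff, Set.mem_singleton_iff, not_or] at hfne
        constructor
        · rintro rfl
          exact hM.2 _ hab f hfM (fun h => hfne.1 h.symm) v (by simp) hvf
        · rintro rfl
          exact hM.2 _ hcd f hfM (fun h => hfne.2 h.symm) v (by simp) hvf
    · rintro ⟨hvb, hvd⟩
      have : v ∈ mCover M := hcov ▸ Set.mem_univ v
      obtain ⟨f, hfM, hvf⟩ := this
      by_cases h1 : f = s(a,b)
      · subst h1
        rcases Sym2.mem_iff.mp hvf with hva | hvb'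
        · exact ⟨s(a,c), Set.mem_insert _ _, by simp [hva]⟩
        · exact absurd hvb' hvb
      · by_cases h2 : f = s(c,d)
        · subst h2
          rcases Sym2.mem_iff.mp hvf with hvc | hvd'
          · exact ⟨s(a,c), Set.mem_insert _ _, by simp [hvc]⟩
          · exact absurd hvd' hvd
        · exact ⟨f, Set.mem_insert_of_mem _ ⟨hfM, by simp [h1, h2]⟩, hvf⟩
  exact adj_of_cover_compl hcard hmax hM1 hbd hcov1

lemma pair_swap {r : ℕ} (hcard : Fintype.card V = 2 * r)
    (hmax : ∀ M : Set (Sym2 V), MaximalEdgeMatching G M → M.ncard = r)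
    {a b c d : V} (h1 : G.Adj a b) (h2 : G.Adj c d) (hac : G.Adj a c)
    (had : a ≠ d) (hbc : b ≠ c) (hbd : b ≠ d) : G.Adj b d := by
  have hvert : ∀ v : V, v ∈ (s(a,b) : Sym2 V) → v ∉ (s(c,d) : Sym2 V) := by
    intro v hv hvf
    rcases Sym2.mem_iff.mp hv with rfl | rfl <;> rcases Sym2.mem_iff.mp hvf with h | h
    · exact hac.ne h
    · exact had h
    · exact hbc h
    · exact hbd h
  have hnm : (s(a,b) : Sym2 V) ≠ s(c,d) := by
    intro h
    rcases Sym2.eq_iff.mp h with ⟨h', -⟩ | ⟨h', -⟩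
    · exact hac.ne h'
    · exact had h'
  have hN : EdgeMatching G {s(a,b), s(c,d)} := by
    constructor
    · rintro e (rfl | rfl)
      · exact G.mem_edgeSet.mpr h1
      · exact G.mem_edgeSet.mpr h2
    · rintro e (rfl | rfl) f (rfl | rfl) hef v hv hvf
      · exact hef rfl
      · exact hvert v hv hvf
      · exact hvert v hvf hv
      · exact hef rfl
  obtain ⟨M, hM, hsub, hcov⟩ := perfect_ext hcard hmax _ hN
  exact swap_adj hcard hmax hM hcov (hsub (by simp)) (hsub (by simp)) hnm hac


lemma edge_dominating {r : ℕ} (hcard : Fintype.card V = 2 * r)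
    (hmax : ∀ M : Set (Sym2 V), MaximalEdgeMatching G M → M.ncard = r)
    (hconn : G.Connected)
    {x y : V} (hxy : G.Adj x y) (u : V) (hux : u ≠ x) (huy : u ≠ y) :
    G.Adj u x ∨ G.Adj u y := by
  by_contra hcon
  push_neg at hcon
  obtain ⟨hx, hy⟩ := hcon
  set U : Set V := {v | v ≠ x ∧ v ≠ y ∧ ¬ G.Adj v x ∧ ¬ G.Adj v y} with hU
  have hclosed : ∀ v ∈ U, ∀ w, G.Adj v w → w ∈ U := by
    intro v hv w hvw
    obtain ⟨hvx, hvy, hvax, hvay⟩ := hv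
    have hwx : w ≠ x := fun h => hvax (h ▸ hvw)
    have hwy : w ≠ y := fun h => hvay (h ▸ hvw)
    refine ⟨hwx, hwy, ?_, ?_⟩
    · intro hwax
      have : G.Adj y v :=
        pair_swap hcard hmax hxy hvw.symm hwax.symm (Ne.symm hvx) (Ne.symm hwy) (Ne.symm hvy)
      exact hvay this.symm
    · intro hway
      have : G.Adj x v :=
        pair_swap hcard hmax hxy.symm hvw.symm hway.symm (Ne.symm hvy) (Ne.symm hwx) (Ne.symm hvx)
      exact hvax this.symm
  have hwalk : ∀ {v w : V}, G.Walk v w → v ∈ U → w ∈ U := by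
    intro v w p
    induction p with
    | nil => exact id
    | cons h p ih => exact fun hv => ih (hclosed _ hv _ h)
  have hxU : x ∈ U := hwalk ((hconn.preconnected u x).some) ⟨hux, huy, hx, hy⟩
  exact hxU.1 rfl

end Aux

/-- a connected graph on 2r vertices in which every maximal matching has
size r is isomorphic to K_{2r} or to K_{r,r}. -/
theorem complete_or_completeBipartite_of_all_maximal_matchings_perfect {V : Type*}
    [Fintype V] (G : SimpleGraph V) (r : ℕ) (hr : 1 ≤ r)
    (hcard : Fintype.card V = 2 * r) (hconn : G.Connected)
    (hmax : ∀ M : Set (Sym2 V), MaximalEdgeMatching G M → M.ncard = r) :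
    Nonempty (G ≃g (⊤ : SimpleGraph (Fin (2 * r)))) ∨
      Nonempty (G ≃g completeBipartiteGraph (Fin r) (Fin r)) := by
  classical
  by_cases hcomp : ∀ v w : V, v ≠ w → G.Adj v w
  · left
    have e : V ≃ Fin (2 * r) := Fintype.equivFinOfCardEq hcard
    refine ⟨⟨e, ?_⟩⟩
    intro v w
    simp only [top_adj, ne_eq, EmbeddingLike.apply_eq_iff_eq]
    exact ⟨fun h => hcomp v w h, fun h => h.ne⟩
  · right
    push_neg at hcomp
    obtain ⟨a, b, hab, hnadj⟩ := hcomp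
    have nbr_eq : ∀ p q : V, p ≠ q → ¬ G.Adj p q → ∀ t, G.Adj p t → G.Adj q t := by
      intro p q hpq hnpq t hpt
      have hqt : q ≠ t := fun h => hnpq (h ▸ hpt)
      rcases edge_dominating hcard hmax hconn hpt q hpq.symm hqt with h | h
      · exact absurd h.symm hnpq
      · exact h
    set B : Set V := G.neighborSet a with hB
    have hBt : ∀ t, t ∈ B ↔ G.Adj a t := fun t => by simp [hB]
    have hadjB : ∀ v, v ∉ B → ∀ t, (G.Adj v t ↔ t ∈ B) := by
      intro v hv t
      by_cases hva : v = a
      · subst hva; rw [hBt t]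
      · have hnav : ¬ G.Adj a v := fun h => hv ((hBt v).mpr h)
        constructor
        · intro h
          exact (hBt t).mpr (nbr_eq v a hva (fun h' => hnav h'.symm) t h)
        · intro ht
          exact nbr_eq a v (Ne.symm hva) hnav t ((hBt t).mp ht)
    have hBindep : ∀ y ∈ B, ∀ z ∈ B, ¬ G.Adj y z := by
      intro y hy z hz hyz
      have hay : G.Adj a y := (hBt y).mp hy
      have haz : G.Adj a z := (hBt z).mp hz
      have hby : G.Adj b y := nbr_eq a b hab hnadj y hay
      have hbz : G.Adj b z := nbr_eq a b hab hnadj z haz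
      exact hnadj (pair_swap hcard hmax hay.symm hbz.symm hyz hby.ne' haz.ne hab)
    have hchar : ∀ v w : V, G.Adj v w ↔ ((v ∉ B ∧ w ∈ B) ∨ (v ∈ B ∧ w ∉ B)) := by
      intro v w
      constructor
      · intro h
        by_cases hv : v ∈ B
        · exact Or.inr ⟨hv, fun hw => hBindep v hv w hw h⟩
        · exact Or.inl ⟨hv, (hadjB v hv w).mp h⟩
      · rintro (⟨hv, hw⟩ | ⟨hv, hw⟩)
        · exact (hadjB v hv w).mpr hw
        · exact ((hadjB w hw v).mpr hv).symm
    have hempty : EdgeMatching G (∅ : Set (Sym2 V)) := ⟨Set.empty_subset _, by simp⟩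
    obtain ⟨M, hM, -, hcov⟩ := perfect_ext hcard hmax ∅ hempty
    have hpartner : ∀ v : V, ∃ w, s(v, w) ∈ M := by
      intro v
      have hv : v ∈ mCover M := hcov ▸ Set.mem_univ v
      obtain ⟨e, heM, hve⟩ := hv
      revert heM hve
      induction e using Sym2.ind with
      | _ p q =>
        intro heM hve
        rcases Sym2.mem_iff.mp hve with h | h
        · exact ⟨q, h ▸ heM⟩
        · exact ⟨p, by rw [Sym2.eq_swap]; exact h ▸ heM⟩
    choose pt hpt using hpartner
    have hptadj : ∀ v, G.Adj v (pt v) := fun v => G.mem_edgeSet.mp (hM.1 (hpt v))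
    have hptuniq : ∀ v w, s(v, w) ∈ M → w = pt v := by
      intro v w h
      by_cases he : (s(v, w) : Sym2 V) = s(v, pt v)
      · rcases Sym2.eq_iff.mp he with ⟨-, h2⟩ | ⟨h1, h2⟩
        · exact h2
        · rw [h2, ← h1]
      · exact (hM.2 _ h _ (hpt v) he v (by simp) (by simp)).elim
    have hptinv : ∀ v, pt (pt v) = v := by
      intro v
      have h : s(pt v, v) ∈ M := by rw [Sym2.eq_swap]; exact hpt v
      exact (hptuniq (pt v) v h).symm
    have hmemB : ∀ v, v ∉ B → pt v ∈ B := by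
      intro v hv
      rcases (hchar v (pt v)).mp (hptadj v) with ⟨-, h⟩ | ⟨h, -⟩
      · exact h
      · exact absurd h hv
    have hmemA : ∀ v, v ∈ B → pt v ∉ B := by
      intro v hv
      rcases (hchar v (pt v)).mp (hptadj v) with ⟨h, -⟩ | ⟨-, h⟩
      · exact absurd hv h
      · exact h
    have hEquiv : (↥(Bᶜ) ≃ ↥B) :=
      { toFun := fun v => ⟨pt v, hmemB v v.2⟩
        invFun := fun w => ⟨pt w, fun h => (hmemA w w.2) h⟩
        left_inv := fun v => Subtype.ext (hptinv v)
        right_inv := fun w => Subtype.ext (hptinv w) }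
    have h1 : (Bᶜ).ncard = B.ncard := by
      rw [← Nat.card_coe_set_eq, ← Nat.card_coe_set_eq]
      exact Nat.card_congr hEquiv
    have h2 : B.ncard + (Bᶜ).ncard = 2 * r := by
      rw [Set.ncard_add_ncard_compl B (Set.toFinite _) (Set.toFinite _),
        Nat.card_eq_fintype_card, hcard]
    have hBr : B.ncard = r := by omega
    have hAr : (Bᶜ).ncard = r := by omega
    letI : Fintype ↥B := Fintype.ofFinite _
    letI : Fintype ↥(Bᶜ) := Fintype.ofFinite _
    have fB : Fintype.card ↥B = r := by
      rw [← Nat.card_eq_fintype_card, Nat.card_coe_set_eq, hBr]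
    have fA : Fintype.card ↥(Bᶜ) = r := by
      rw [← Nat.card_eq_fintype_card, Nat.card_coe_set_eq, hAr]
    have eB : ↥B ≃ Fin r := Fintype.equivFinOfCardEq fB
    have eA : ↥(Bᶜ) ≃ Fin r := Fintype.equivFinOfCardEq fA
    let ε : V ≃ (Fin r ⊕ Fin r) := (Equiv.Set.sumCompl B).symm.trans (Equiv.sumCongr eB eA)
    refine ⟨⟨ε, ?_⟩⟩
    intro v w
    rw [hchar v w]
    have hεmem : ∀ x (hx : x ∈ B), ε x = Sum.inl (eB ⟨x, hx⟩) := by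
      intro x hx
      simp [ε, Equiv.Set.sumCompl_symm_apply_of_mem hx]
    have hεnot : ∀ x (hx : x ∉ B), ε x = Sum.inr (eA ⟨x, hx⟩) := by
      intro x hx
      simp [ε, Equiv.Set.sumCompl_symm_apply_of_notMem hx]
    by_cases hv : v ∈ B <;> by_cases hw : w ∈ B
    · rw [hεmem v hv, hεmem w hw]; simp [completeBipartiteGraph, hv, hw]
    · rw [hεmem v hv, hεnot w hw]; simp [completeBipartiteGraph, hv, hw]
    · rw [hεnot v hv, hεmem w hw]; simp [completeBipartiteGraph, hv, hw]
    · rw [hεnot v hv, hεnot w hw]; simp [completeBipartiteGraph, hv, hw]
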